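/- Suppose G_β := E[q₀ x′] is nonsingular. Then E[(z − ζ₀(c)) t] ≠ 0, and the first component α₀ of the unique solution β₀ of the moment condition E[q₀(y − x′β₀)] = 0 satisfies α₀ = E[(z − ζ₀(c)) y] / E[(z − ζ₀(c)) t] = Cov(z − ζ₀(c), y) / Cov(z − ζ₀(c), t), where the covariance identities use that E[z − ζ₀(c)] = 0 and E[(z − ζ₀(c)) r′] = 0_k′. -/
import Mathlib


open MeasureTheory ProbabilityTheory Filter
open scoped BigOperators

/-- Prepend an entry to a real vector (non-dependent `Fin.cons`). -/
def consR {k : ℕ} (a : ℝ) (v : Fin k → ℝ) : Fin (k + 1) → ℝ := Fin.cons a v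

/-- Covariance of two real random variables. -/
noncomputable def covR {Ω : Type*} [MeasurableSpace Ω] (P : Measure Ω) (f g : Ω → ℝ) : ℝ :=
  ∫ ω, (f ω - ∫ ω', f ω' ∂P) * (g ω - ∫ ω', g ω' ∂P) ∂P

private lemma covR_eq_of_mean_zero {Ω : Type*} [MeasurableSpace Ω] (P : Measure Ω)
    [IsProbabilityMeasure P] {f g : Ω → ℝ} (hf0 : (∫ ω, f ω ∂P) = 0)
    (hf : Integrable f P) (hfg : Integrable (fun ω => f ω * g ω) P) :
    covR P f g = ∫ ω, f ω * g ω ∂P := by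
  unfold covR
  rw [hf0]
  have : ∀ ω, (f ω - 0) * (g ω - ∫ ω', g ω' ∂P)
      = f ω * g ω - (∫ ω', g ω' ∂P) * f ω := by
    intro ω; ring
  rw [integral_congr_ae (Filter.Eventually.of_forall this),
    integral_sub hfg (hf.const_mul _), integral_const_mul, hf0, mul_zero, sub_zero]

/-- If `G_β = E[q₀ x′]` is nonsingular then `E[(z − ζ₀(c)) t] ≠ 0` and the
first component `α₀` of the unique solution `β₀` of `E[q₀(y − x′β₀)] = 0` equals
`E[(z − ζ₀(c)) y]/E[(z − ζ₀(c)) t] = Cov(z − ζ₀(c), y)/Cov(z − ζ₀(c), t)`. -/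
theorem stmt4
    {d k : ℕ} {Ω : Type*} [MeasurableSpace Ω] (P : Measure Ω) [IsProbabilityMeasure P]
    (y t z : Ω → ℝ) (c : Ω → Fin d → ℝ) (ρ : (Fin d → ℝ) → Fin k → ℝ)
    (ζ0 : (Fin d → ℝ) → ℝ) (β0 : Fin (k + 1) → ℝ)
    (hy : Measurable y) (ht : Measurable t) (hz : Measurable z) (hc : Measurable c)
    (hρ : Measurable ρ) (hζ0 : Measurable ζ0)
    (htbin : ∀ ω, t ω = 0 ∨ t ω = 1) (hzbin : ∀ ω, z ω = 0 ∨ z ω = 1)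
    (hζ01 : ∀ u, ζ0 u ∈ Set.Icc (0 : ℝ) 1)
    (hcond : (fun ω => ζ0 (c ω)) =ᵐ[P] P[z | MeasurableSpace.comap c inferInstance])
    (hyint : Integrable y P)
    (hy2int : Integrable (fun ω => (y ω) ^ 2) P)
    (hrint : Integrable (fun ω => ‖ρ (c ω)‖ ^ 2) P)
    (hG : (Matrix.of fun i j : Fin (k + 1) =>
      ∫ ω, consR (z ω - ζ0 (c ω)) (ρ (c ω)) i * consR (t ω) (ρ (c ω)) j ∂P).det ≠ 0)
    (hmom : ∀ i, ∫ ω, consR (z ω - ζ0 (c ω)) (ρ (c ω)) i *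
      (y ω - ∑ j, consR (t ω) (ρ (c ω)) j * β0 j) ∂P = 0) :
    (∫ ω, (z ω - ζ0 (c ω)) * t ω ∂P) ≠ 0 ∧
    β0 0 = (∫ ω, (z ω - ζ0 (c ω)) * y ω ∂P) / (∫ ω, (z ω - ζ0 (c ω)) * t ω ∂P) ∧
    β0 0 = covR P (fun ω => z ω - ζ0 (c ω)) y / covR P (fun ω => z ω - ζ0 (c ω)) t := by
  have hm : MeasurableSpace.comap c inferInstance ≤ ‹MeasurableSpace Ω› := hc.comap_le
  set f : Ω → ℝ := fun ω => z ω - ζ0 (c ω) with hf_def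
  -- basic bounds
  have hfb : ∀ ω, |f ω| ≤ 1 := by
    intro ω
    have h1 := hζ01 (c ω)
    rcases hzbin ω with h | h <;>
      simp only [hf_def, h, Set.mem_Icc] at * <;> rw [abs_le] <;> constructor <;> linarith [h1.1, h1.2]
  have htb : ∀ ω, |t ω| ≤ 1 := by
    intro ω; rcases htbin ω with h | h <;> simp [h]
  have hζc : Measurable fun ω => ζ0 (c ω) := hζ0.comp hc
  have hfmeas : Measurable f := hz.sub hζc
  have hzint : Integrable z P := by
    refine (integrable_const (1 : ℝ)).mono' hz.aestronglyMeasurable ?_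
    refine Filter.Eventually.of_forall fun ω => ?_
    rcases hzbin ω with h | h <;> simp [h]
  have htint : Integrable t P := by
    refine (integrable_const (1 : ℝ)).mono' ht.aestronglyMeasurable ?_
    exact Filter.Eventually.of_forall fun ω => htb ω
  have hrj_meas : ∀ j : Fin k, Measurable fun ω => ρ (c ω) j := fun j =>
    (measurable_pi_apply j).comp (hρ.comp hc)
  have hrj_bound : ∀ (j : Fin k) (ω : Ω), |ρ (c ω) j| ≤ 1 + ‖ρ (c ω)‖ ^ 2 := by
    intro j ω
    have h1 : |ρ (c ω) j| ≤ ‖ρ (c ω)‖ := by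
      simpa using norm_le_pi_norm (ρ (c ω)) j
    nlinarith [norm_nonneg (ρ (c ω))]
  have hrjint : ∀ j : Fin k, Integrable (fun ω => ρ (c ω) j) P := by
    intro j
    refine ((integrable_const (1 : ℝ)).add hrint).mono' (hrj_meas j).aestronglyMeasurable ?_
    refine Filter.Eventually.of_forall fun ω => ?_
    simpa using hrj_bound j ω
  -- integrability of products with f
  have hfg_int : ∀ g : Ω → ℝ, Measurable g → Integrable g P →
      Integrable (fun ω => f ω * g ω) P := by
    intro g hg hgint
    refine hgint.abs.mono' (hfmeas.mul hg).aestronglyMeasurable ?_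
    refine Filter.Eventually.of_forall fun ω => ?_
    have := hfb ω
    calc ‖f ω * g ω‖ = |f ω| * |g ω| := abs_mul _ _
      _ ≤ 1 * |g ω| := mul_le_mul_of_nonneg_right this (abs_nonneg _)
      _ = |g ω| := one_mul _
  have hft_int : Integrable (fun ω => f ω * t ω) P := hfg_int t ht htint
  have hfy_int : Integrable (fun ω => f ω * y ω) P := hfg_int y hy hyint
  have hfr_int : ∀ j, Integrable (fun ω => f ω * ρ (c ω) j) P := fun j =>
    hfg_int _ (hrj_meas j) (hrjint j)
  -- key orthogonality: E[f ⬝ g] = 0 for g measurable w.r.t. σ(c)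
  have key : ∀ g : Ω → ℝ, Measurable[MeasurableSpace.comap c inferInstance] g → Integrable g P →
      (∫ ω, f ω * g ω ∂P) = 0 := by
    intro g hgm hgint
    have hg : Measurable g := hgm.mono hm le_rfl
    have hgz_int : Integrable (fun ω => g ω * z ω) P := by
      refine hgint.abs.mono' (hg.mul hz).aestronglyMeasurable ?_
      refine Filter.Eventually.of_forall fun ω => ?_
      have hzb : |z ω| ≤ 1 := by rcases hzbin ω with h | h <;> simp [h]
      calc ‖g ω * z ω‖ = |g ω| * |z ω| := abs_mul _ _
        _ ≤ |g ω| * 1 := mul_le_mul_of_nonneg_left hzb (abs_nonneg _)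
        _ = |g ω| := mul_one _
    have hgζ_int : Integrable (fun ω => g ω * ζ0 (c ω)) P := by
      refine hgint.abs.mono' (hg.mul hζc).aestronglyMeasurable ?_
      refine Filter.Eventually.of_forall fun ω => ?_
      have h1 := hζ01 (c ω)
      have hζb : |ζ0 (c ω)| ≤ 1 := by rw [abs_le]; constructor <;> linarith [h1.1, h1.2]
      calc ‖g ω * ζ0 (c ω)‖ = |g ω| * |ζ0 (c ω)| := abs_mul _ _
        _ ≤ |g ω| * 1 := mul_le_mul_of_nonneg_left hζb (abs_nonneg _)
        _ = |g ω| := mul_one _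
    have hsplit : ∀ ω, f ω * g ω = g ω * z ω - g ω * ζ0 (c ω) := by
      intro ω; simp only [hf_def]; ring
    rw [integral_congr_ae (Filter.Eventually.of_forall hsplit),
      integral_sub hgz_int hgζ_int]
    have e1 : (∫ ω, g ω * ζ0 (c ω) ∂P) = ∫ ω, g ω * (P[z|MeasurableSpace.comap c inferInstance]) ω ∂P := by
      refine integral_congr_ae ?_
      filter_upwards [hcond] with ω hω
      rw [hω]
    have e2 : (fun ω => g ω * (P[z|MeasurableSpace.comap c inferInstance]) ω) =ᵐ[P] P[(fun ω => g ω * z ω)|MeasurableSpace.comap c inferInstance] :=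
      (condExp_mul_of_stronglyMeasurable_left hgm.stronglyMeasurable hgz_int hzint).symm
    have e3 : (∫ ω, g ω * (P[z|MeasurableSpace.comap c inferInstance]) ω ∂P) = ∫ ω, g ω * z ω ∂P := by
      rw [integral_congr_ae e2, integral_condExp hm]
    rw [e1, e3, sub_self]
  have hcm : Measurable[MeasurableSpace.comap c inferInstance] c := Measurable.of_comap_le le_rfl
  -- orthogonality facts
  have hfr0 : ∀ j : Fin k, (∫ ω, f ω * ρ (c ω) j ∂P) = 0 := by
    intro j
    exact key _ (((measurable_pi_apply j).comp hρ).comp hcm) (hrjint j)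
  -- the (0,0) entry of G is nonzero
  have hA : (∫ ω, f ω * t ω ∂P) ≠ 0 := by
    intro h0
    apply hG
    refine Matrix.det_eq_zero_of_row_eq_zero 0 fun j => ?_
    induction j using Fin.cases with
    | zero =>
      simpa [consR, Matrix.of_apply] using h0
    | succ j =>
      simpa [consR, Matrix.of_apply] using hfr0 j
  -- moment condition at index 0
  have hmom0 := hmom 0
  have hexp : ∀ ω, consR (f ω) (ρ (c ω)) 0 *
      (y ω - ∑ j, consR (t ω) (ρ (c ω)) j * β0 j)
      = f ω * y ω - (β0 0 * (f ω * t ω) +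
        ∑ j : Fin k, β0 j.succ * (f ω * ρ (c ω) j)) := by
    intro ω
    simp only [consR, Fin.cons_zero, Fin.sum_univ_succ, Fin.cons_succ]
    have h : ∑ j : Fin k, β0 j.succ * (f ω * ρ (c ω) j)
        = f ω * ∑ j : Fin k, ρ (c ω) j * β0 j.succ := by
      rw [Finset.mul_sum]; exact Finset.sum_congr rfl fun j _ => by ring
    rw [h]; ring
  have hrest_int : Integrable (fun ω => β0 0 * (f ω * t ω) +
      ∑ j : Fin k, β0 j.succ * (f ω * ρ (c ω) j)) P :=
    (hft_int.const_mul _).add (integrable_finset_sum _ fun j _ => (hfr_int j).const_mul _)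
  have hmain : (∫ ω, f ω * y ω ∂P) - β0 0 * (∫ ω, f ω * t ω ∂P) = 0 := by
    rw [integral_congr_ae (Filter.Eventually.of_forall hexp)] at hmom0
    rw [integral_sub hfy_int hrest_int, integral_add (hft_int.const_mul _)
      (integrable_finset_sum _ fun j _ => (hfr_int j).const_mul _),
      integral_finset_sum _ (fun j _ => (hfr_int j).const_mul _)] at hmom0
    simp only [integral_const_mul, hfr0, mul_zero, Finset.sum_const_zero, add_zero] at hmom0
    exact hmom0
  have hβ : β0 0 = (∫ ω, f ω * y ω ∂P) / (∫ ω, f ω * t ω ∂P) := by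
    field_simp
    linarith [hmain]
  -- covariance identities
  have hf0 : (∫ ω, f ω ∂P) = 0 := by
    have := key (fun _ => (1 : ℝ)) measurable_const (integrable_const 1)
    simpa using this
  have hfint : Integrable f P := by
    refine (integrable_const (1 : ℝ)).mono' hfmeas.aestronglyMeasurable ?_
    exact Filter.Eventually.of_forall fun ω => hfb ω
  have hcovy : covR P f y = ∫ ω, f ω * y ω ∂P :=
    covR_eq_of_mean_zero P hf0 hfint hfy_int
  have hcovt : covR P f t = ∫ ω, f ω * t ω ∂P :=
    covR_eq_of_mean_zero P hf0 hfint hft_int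
  exact ⟨hA, hβ, by rw [hcovy, hcovt]; exact hβ⟩
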